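/- Let F : X → ℝ be a non-decreasing, differentiable, DR-submodular function on a compact rectangle X = ∏_{i=1}^n [ℓ_i, u_i] with ℓ_i < u_i for all i. Then for all x, x̂ ∈ X, F(x) ≤ F̃(x; x̂) ≤ F̆(x; x̂); i.e., the approximate first-order estimator F̆(·; x̂) is a global overestimator of F on X. -/

import Mathlib

open Set Filter

private lemma slope_nonneg_left {g : ℝ → ℝ} {d a : ℝ} (ha : a < 0) (hg : HasDerivAt g d 0)
    (hm : ∀ t, a ≤ t → t ≤ 0 → g t ≤ g 0) : 0 ≤ d := by
  have h := hasDerivAt_iff_tendsto_slope.mp hg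
  have h2 : Tendsto (slope g 0) (nhdsWithin 0 (Iio 0)) (nhds d) :=
    h.mono_left (nhdsWithin_mono _ (fun t ht => ne_of_lt ht))
  refine ge_of_tendsto h2 ?_
  filter_upwards [Ioo_mem_nhdsLT_of_mem (right_mem_Ioc.mpr ha)] with t ht
  have h1 : g t ≤ g 0 := hm t ht.1.le ht.2.le
  rw [slope_def_field, div_nonneg_iff]
  right
  constructor <;> linarith [ht.2]

private lemma slope_nonneg_right {g : ℝ → ℝ} {d b : ℝ} (hb : 0 < b) (hg : HasDerivAt g d 0)
    (hm : ∀ t, 0 ≤ t → t ≤ b → g 0 ≤ g t) : 0 ≤ d := by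
  have h := hasDerivAt_iff_tendsto_slope.mp hg
  have h2 : Tendsto (slope g 0) (nhdsWithin 0 (Ioi 0)) (nhds d) :=
    h.mono_left (nhdsWithin_mono _ (fun t ht => ne_of_gt ht))
  refine ge_of_tendsto h2 ?_
  filter_upwards [Ioo_mem_nhdsGT_of_mem (left_mem_Ico.mpr hb)] with t ht
  have h1 : g 0 ≤ g t := hm t ht.1.le ht.2.le
  rw [slope_def_field, div_nonneg_iff]
  left
  constructor <;> linarith [ht.1]

/-- the approximate first-order estimator globally overestimates `F`.
For a non-decreasing, differentiable, DR-submodular `F` on the compact rectangle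
`X = Icc ℓ u` (with `ℓ i < u i`), for all `x, x̂ ∈ X`,
`F x ≤ F̃(x; x̂) ≤ F̆(x; x̂)`, where
`F̃(x; x̂) = F x̂ + ∑ i (∂F/∂x_i)(x̂)·[x_i − x̂_i]⁺` and
`F̆(x; x̂) = F x̂ + ∑ i (∂F/∂x_i)(x̂)·((u_i − x̂_i)/(u_i − ℓ_i))·(x_i − ℓ_i)`.
(`xh` plays the role of `x̂`.) -/
theorem stmt_10 {n : ℕ} (hn : 1 ≤ n) (ℓ u : Fin n → ℝ) (hlu : ∀ i, ℓ i < u i)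
    (F : (Fin n → ℝ) → ℝ) (hdiff : Differentiable ℝ F)
    (hsub : ∀ x ∈ Set.Icc ℓ u, ∀ y ∈ Set.Icc ℓ u, F (x ⊔ y) + F (x ⊓ y) ≤ F x + F y)
    (hconc : ∀ (i : Fin n), ∀ x ∈ Set.Icc ℓ u,
      ConcaveOn ℝ {t : ℝ | x + Pi.single i t ∈ Set.Icc ℓ u}
        (fun t : ℝ => F (x + Pi.single i t)))
    (hmono : ∀ x ∈ Set.Icc ℓ u, ∀ y ∈ Set.Icc ℓ u, x ≤ y → F x ≤ F y)
    (x xh : Fin n → ℝ) (hx : x ∈ Set.Icc ℓ u) (hxh : xh ∈ Set.Icc ℓ u) :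
    F x ≤ F xh + ∑ i : Fin n, fderiv ℝ F xh (Pi.single i 1) * max (x i - xh i) 0
    ∧ F xh + ∑ i : Fin n, fderiv ℝ F xh (Pi.single i 1) * max (x i - xh i) 0
      ≤ F xh + ∑ i : Fin n,
          fderiv ℝ F xh (Pi.single i 1) * ((u i - xh i) / (u i - ℓ i)) * (x i - ℓ i) := by
  classical
  -- membership helper
  have mem_single : ∀ (i : Fin n) (t : ℝ), ℓ i ≤ xh i + t → xh i + t ≤ u i →
      xh + Pi.single i t ∈ Set.Icc ℓ u := by
    intro i t h1 h2
    constructor <;> rw [Pi.le_def] <;> intro j <;> by_cases h : j = i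
    · subst h; simpa using h1
    · simp only [Pi.add_apply, Pi.single_apply, if_neg h, add_zero]
      exact hxh.1 j
    · subst h; simpa using h2
    · simp only [Pi.add_apply, Pi.single_apply, if_neg h, add_zero]
      exact hxh.2 j
  -- derivative of the one-dimensional slice
  have hg : ∀ i : Fin n, HasDerivAt (fun t : ℝ => F (xh + Pi.single i t))
      (fderiv ℝ F xh (Pi.single i 1)) 0 := by
    intro i
    have hps : ∀ t : ℝ, (Pi.single i t : Fin n → ℝ) = t • (Pi.single i 1 : Fin n → ℝ) := by
      intro t; funext j
      simp only [Pi.smul_apply, smul_eq_mul, Pi.single_apply]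
      by_cases h : j = i <;> simp [h]
    have h1 : HasDerivAt (fun t : ℝ => xh + t • (Pi.single i 1 : Fin n → ℝ))
        (Pi.single i 1 : Fin n → ℝ) 0 := by
      simpa using ((hasDerivAt_id (0:ℝ)).smul_const (Pi.single i 1 : Fin n → ℝ)).const_add xh
    have h3 := ((hdiff (xh + (0:ℝ) • (Pi.single i 1 : Fin n → ℝ))).hasFDerivAt).comp_hasDerivAt 0 h1
    have h0 : xh + (0:ℝ) • (Pi.single i 1 : Fin n → ℝ) = xh := by simp
    rw [h0] at h3
    have hfun : (fun t : ℝ => F (xh + Pi.single i t))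
        = F ∘ fun t : ℝ => xh + t • (Pi.single i 1 : Fin n → ℝ) := by
      funext t
      simp only [Function.comp_apply]
      rw [hps t]
    rw [hfun]
    exact h3
  -- gradient is nonnegative
  have grad_nonneg : ∀ i : Fin n, 0 ≤ fderiv ℝ F xh (Pi.single i 1) := by
    intro i
    rcases lt_or_ge (xh i) (u i) with h | h
    · refine slope_nonneg_right (b := u i - xh i) (by linarith) (hg i) ?_
      intro t ht0 htb
      have hmem := mem_single i t (by linarith [hxh.1 i]) (by linarith)
      have hle : xh ≤ xh + Pi.single i t := by
        rw [Pi.le_def]; intro j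
        by_cases hj : j = i <;> simp [Pi.single_apply, hj] <;> linarith
      simpa using hmono xh hxh _ hmem hle
    · have hl : ℓ i - xh i < 0 := by linarith [hlu i, hxh.2 i]
      refine slope_nonneg_left hl (hg i) ?_
      intro t hta ht0
      have hmem := mem_single i t (by linarith) (by linarith [hxh.2 i])
      have hle : xh + Pi.single i t ≤ xh := by
        rw [Pi.le_def]; intro j
        by_cases hj : j = i <;> simp [Pi.single_apply, hj] <;> linarith
      simpa using hmono _ hmem xh hxh hle
  -- concavity tangent-line bound
  have conc_bound : ∀ (i : Fin n) (δ : ℝ), 0 ≤ δ → xh i + δ ≤ u i →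
      F (xh + Pi.single i δ) ≤ F xh + fderiv ℝ F xh (Pi.single i 1) * δ := by
    intro i δ hδ hub
    rcases eq_or_lt_of_le hδ with h | h
    · rw [← h]; simp
    · have hcc := hconc i xh hxh
      have h0 : (0:ℝ) ∈ {t : ℝ | xh + Pi.single i t ∈ Set.Icc ℓ u} := by simpa using hxh
      have hδm : δ ∈ {t : ℝ | xh + Pi.single i t ∈ Set.Icc ℓ u} :=
        mem_single i δ (by linarith [hxh.1 i]) hub
      have hs := hcc.slope_le_of_hasDerivAt h0 hδm h (hg i)
      rw [slope_def_field] at hs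
      have hd : F (xh + Pi.single i δ) - F (xh + Pi.single i 0)
          ≤ fderiv ℝ F xh (Pi.single i 1) * (δ - 0) :=
        (div_le_iff₀ (by linarith)).mp hs
      simp only [Pi.single_zero, add_zero, sub_zero] at hd
      linarith
  -- the telescoping claim
  have claim : ∀ k : ℕ, k ≤ n →
      F (fun j : Fin n => if (j:ℕ) < k then max (x j) (xh j) else xh j)
        ≤ F xh + ∑ j ∈ Finset.univ.filter (fun j : Fin n => (j:ℕ) < k),
            fderiv ℝ F xh (Pi.single j 1) * max (x j - xh j) 0 := by
    intro k
    induction k with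
    | zero => intro _; simp
    | succ k ih =>
      intro hk1
      have hk : k < n := hk1
      set i : Fin n := ⟨k, hk⟩ with hi
      set δ : ℝ := max (x i - xh i) 0 with hδdef
      have hδ0 : 0 ≤ δ := le_max_right _ _
      have hδeq : xh i + δ = max (x i) (xh i) := by
        rcases le_total (x i) (xh i) with h | h
        · rw [max_eq_right h, hδdef, max_eq_right (by linarith)]; ring
        · rw [max_eq_left h, hδdef, max_eq_left (by linarith)]; ring
      set a : Fin n → ℝ := xh + Pi.single i δ with hadef
      set wk : Fin n → ℝ := fun j => if (j:ℕ) < k then max (x j) (xh j) else xh j with hwk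
      set wk1 : Fin n → ℝ := fun j => if (j:ℕ) < k+1 then max (x j) (xh j) else xh j with hwk1
      have ha_mem : a ∈ Set.Icc ℓ u :=
        mem_single i δ (by linarith [hxh.1 i])
          (by rw [hδeq]; exact max_le (hx.2 i) (hxh.2 i))
      have hwk_mem : wk ∈ Set.Icc ℓ u := by
        constructor <;> rw [Pi.le_def] <;> intro j <;> simp only [hwk] <;> split_ifs
        · exact le_trans (hx.1 j) (le_max_left _ _)
        · exact hxh.1 j
        · exact max_le (hx.2 j) (hxh.2 j)
        · exact hxh.2 j
      have hik : (i : ℕ) = k := rfl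
      have hsup : wk ⊔ a = wk1 := by
        funext j
        rcases lt_trichotomy (j:ℕ) k with h | h | h
        · have hji : j ≠ i := by
            intro hc
            have h2 : (j:ℕ) = k := by rw [hc]
            omega
          simp only [Pi.sup_apply, hwk, hwk1, hadef, Pi.add_apply, Pi.single_apply,
            if_pos h, if_pos (by omega : (j:ℕ) < k+1), if_neg hji, add_zero]
          exact sup_eq_left.mpr (le_max_right _ _)
        · have hji : j = i := Fin.ext (by rw [hik]; exact h)
          simp only [Pi.sup_apply, hwk, hwk1, hadef, Pi.add_apply, Pi.single_apply,
            if_neg (by omega : ¬ ((j:ℕ) < k)), if_pos (by omega : (j:ℕ) < k+1), if_pos hji]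
          rw [hji]
          rw [sup_eq_right.mpr (by linarith : xh i ≤ xh i + δ)]
          exact hδeq
        · have hji : j ≠ i := by
            intro hc
            have h2 : (j:ℕ) = k := by rw [hc]
            omega
          simp only [Pi.sup_apply, hwk, hwk1, hadef, Pi.add_apply, Pi.single_apply,
            if_neg (by omega : ¬ ((j:ℕ) < k)), if_neg (by omega : ¬ ((j:ℕ) < k+1)),
            if_neg hji, add_zero]
          exact sup_idem _
      have hinf : wk ⊓ a = xh := by
        funext j
        rcases lt_trichotomy (j:ℕ) k with h | h | h
        · have hji : j ≠ i := by
            intro hc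
            have h2 : (j:ℕ) = k := by rw [hc]
            omega
          simp only [Pi.inf_apply, hwk, hadef, Pi.add_apply, Pi.single_apply,
            if_pos h, if_neg hji, add_zero]
          exact inf_eq_right.mpr (le_max_right _ _)
        · have hji : j = i := Fin.ext (by rw [hik]; exact h)
          simp only [Pi.inf_apply, hwk, hadef, Pi.add_apply, Pi.single_apply,
            if_neg (by omega : ¬ ((j:ℕ) < k)), if_pos hji]
          rw [hji]
          exact inf_eq_left.mpr (by linarith)
        · have hji : j ≠ i := by
            intro hc
            have h2 : (j:ℕ) = k := by rw [hc]
            omega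
          simp only [Pi.inf_apply, hwk, hadef, Pi.add_apply, Pi.single_apply,
            if_neg (by omega : ¬ ((j:ℕ) < k)), if_neg hji, add_zero]
          exact inf_idem _
      have hsubm := hsub wk hwk_mem a ha_mem
      rw [hsup, hinf] at hsubm
      have hFa : F a ≤ F xh + fderiv ℝ F xh (Pi.single i 1) * δ :=
        conc_bound i δ hδ0 (by rw [hδeq]; exact max_le (hx.2 i) (hxh.2 i))
      have hsum : Finset.univ.filter (fun j : Fin n => (j:ℕ) < k+1)
          = insert i (Finset.univ.filter (fun j : Fin n => (j:ℕ) < k)) := by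
        ext j
        simp only [Finset.mem_filter, Finset.mem_insert, Finset.mem_univ, true_and,
          Fin.ext_iff, hi]
        omega
      have ihk := ih (le_of_lt hk)
      calc F wk1 ≤ F wk + F a - F xh := by linarith
        _ ≤ (F xh + ∑ j ∈ Finset.univ.filter (fun j : Fin n => (j:ℕ) < k),
              fderiv ℝ F xh (Pi.single j 1) * max (x j - xh j) 0) + F a - F xh := by
            linarith
        _ ≤ F xh + ∑ j ∈ Finset.univ.filter (fun j : Fin n => (j:ℕ) < k+1),
              fderiv ℝ F xh (Pi.single j 1) * max (x j - xh j) 0 := by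
            rw [hsum, Finset.sum_insert (by simp [hi])]
            have : δ = max (x i - xh i) 0 := hδdef
            linarith [hFa]
  -- assemble part 1
  have hwn_mem : (fun j : Fin n => if (j:ℕ) < n then max (x j) (xh j) else xh j)
      ∈ Set.Icc ℓ u := by
    constructor <;> rw [Pi.le_def] <;> intro j <;> rw [if_pos j.isLt]
    · exact le_trans (hx.1 j) (le_max_left _ _)
    · exact max_le (hx.2 j) (hxh.2 j)
  have hxle : x ≤ (fun j : Fin n => if (j:ℕ) < n then max (x j) (xh j) else xh j) := by
    rw [Pi.le_def]; intro j; rw [if_pos j.isLt]; exact le_max_left _ _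
  have h1 : F x ≤ F (fun j : Fin n => if (j:ℕ) < n then max (x j) (xh j) else xh j) :=
    hmono x hx _ hwn_mem hxle
  have h2 := claim n le_rfl
  have hfilter : Finset.univ.filter (fun j : Fin n => (j:ℕ) < n) = Finset.univ :=
    Finset.filter_true_of_mem (fun j _ => j.isLt)
  rw [hfilter] at h2
  constructor
  · exact le_trans h1 h2
  · apply add_le_add_right
    apply Finset.sum_le_sum
    intro i _
    have hGi := grad_nonneg i
    have hlt := hlu i
    rw [mul_assoc]
    apply mul_le_mul_of_nonneg_left _ hGi
    apply max_le
    · rw [div_mul_eq_mul_div, le_div_iff₀ (by linarith)]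
      nlinarith [hx.1 i, hx.2 i, hxh.1 i, hxh.2 i]
    · exact mul_nonneg (div_nonneg (by linarith [hxh.2 i]) (by linarith))
        (by linarith [hx.1 i])
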